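/- Let α > 0. The function h(Y) = Y/(2α²Y² − 2) − arctanh(αY)/(2α) is well-defined and strictly monotone on the open interval (−1/α, 1/α), and h(Y) → −∞ as Y → (1/α)⁻ and h(Y) → +∞ as Y → (−1/α)⁺. -/

import Mathlib

open Set Filter

/-- Real inverse hyperbolic tangent on `(-1,1)`. -/
noncomputable def arctanh (y : ℝ) : ℝ := Real.log ((1 + y) / (1 - y)) / 2

lemma arctanh_odd (y : ℝ) : arctanh (-y) = - arctanh y := by
  unfold arctanh
  rw [show (1 + -y) / (1 - -y) = ((1 + y) / (1 - y))⁻¹ by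
    rw [inv_div]; ring_nf, Real.log_inv]
  ring

lemma tendsto_atBot {α : ℝ} (hα : 0 < α)
    (h : ℝ → ℝ)
    (hh : ∀ Y, h Y = Y / (2*α^2*Y^2 - 2) - arctanh (α*Y) / (2*α)) :
    Tendsto h (nhdsWithin (1/α) (Iio (1/α))) atBot := by
  have hev : ∀ᶠ Y in nhdsWithin (1/α) (Iio (1/α)), Y ∈ Ioo (-(1/α)) (1/α) := by
    have : Ioo (-(1/α)) (1/α) ∈ nhdsWithin (1/α) (Iio (1/α)) :=
      Ioo_mem_nhdsLT_of_mem ⟨by linarith [one_div_pos.mpr hα], le_rfl⟩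
    exact this
  have hbound : ∀ Y ∈ Ioo (-(1/α)) (1/α), -1 < α*Y ∧ α*Y < 1 := by
    intro Y hY
    constructor
    · have : α * (-(1/α)) < α * Y := mul_lt_mul_of_pos_left hY.1 hα
      calc (-1:ℝ) = α * (-(1/α)) := by field_simp
        _ < α * Y := this
    · calc α * Y < α * (1/α) := mul_lt_mul_of_pos_left hY.2 hα
        _ = 1 := by field_simp
  -- first term → atBot
  have hDpos : Tendsto (fun Y : ℝ => 2 - 2*α^2*Y^2) (nhdsWithin (1/α) (Iio (1/α)))
      (nhdsWithin 0 (Ioi 0)) := by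
    rw [tendsto_nhdsWithin_iff]
    constructor
    · have hc : Tendsto (fun Y : ℝ => 2 - 2*α^2*Y^2) (nhds (1/α))
          (nhds (2 - 2*α^2*(1/α)^2)) := by
        apply Continuous.tendsto; continuity
      have : 2 - 2*α^2*(1/α)^2 = 0 := by field_simp; ring
      rw [this] at hc
      exact hc.mono_left nhdsWithin_le_nhds
    · filter_upwards [hev] with Y hY
      have := hbound Y hY
      simp only [mem_Ioi]
      nlinarith [this.1, this.2]
  have hA : Tendsto (fun Y : ℝ => Y / (2*α^2*Y^2 - 2)) (nhdsWithin (1/α) (Iio (1/α)))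
      atBot := by
    have hinv : Tendsto (fun Y : ℝ => (2 - 2*α^2*Y^2)⁻¹) (nhdsWithin (1/α) (Iio (1/α)))
        atTop := tendsto_inv_nhdsGT_zero.comp hDpos
    have hid : Tendsto (fun Y : ℝ => Y) (nhdsWithin (1/α) (Iio (1/α))) (nhds (1/α)) :=
      tendsto_id.mono_left nhdsWithin_le_nhds
    have hmul : Tendsto (fun Y : ℝ => Y * (2 - 2*α^2*Y^2)⁻¹)
        (nhdsWithin (1/α) (Iio (1/α))) atTop :=
      hid.pos_mul_atTop (one_div_pos.mpr hα) hinv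
    have := tendsto_neg_atTop_atBot.comp hmul
    refine this.congr fun Y => ?_
    have : 2*α^2*Y^2 - 2 = -(2 - 2*α^2*Y^2) := by ring
    rw [this, div_neg, div_eq_mul_inv]
    rfl
  -- second term: arctanh(αY)/(2α) → atTop
  have hB : Tendsto (fun Y : ℝ => arctanh (α*Y) / (2*α)) (nhdsWithin (1/α) (Iio (1/α)))
      atTop := by
    have hden : Tendsto (fun Y : ℝ => 1 - α*Y) (nhdsWithin (1/α) (Iio (1/α)))
        (nhdsWithin 0 (Ioi 0)) := by
      rw [tendsto_nhdsWithin_iff]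
      constructor
      · have hc : Tendsto (fun Y : ℝ => 1 - α*Y) (nhds (1/α)) (nhds (1 - α*(1/α))) := by
          apply Continuous.tendsto; continuity
        have : 1 - α*(1/α) = 0 := by field_simp; ring
        rw [this] at hc
        exact hc.mono_left nhdsWithin_le_nhds
      · filter_upwards [hev] with Y hY
        have := (hbound Y hY).2
        simp only [mem_Ioi]; linarith
    have hnum : Tendsto (fun Y : ℝ => 1 + α*Y) (nhdsWithin (1/α) (Iio (1/α)))
        (nhds 2) := by
      have hc : Tendsto (fun Y : ℝ => 1 + α*Y) (nhds (1/α)) (nhds (1 + α*(1/α))) := by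
        apply Continuous.tendsto; continuity
      have : 1 + α*(1/α) = 2 := by field_simp; norm_num
      rw [this] at hc
      exact hc.mono_left nhdsWithin_le_nhds
    have hu : Tendsto (fun Y : ℝ => (1 + α*Y) * (1 - α*Y)⁻¹)
        (nhdsWithin (1/α) (Iio (1/α))) atTop :=
      hnum.pos_mul_atTop (by norm_num) (tendsto_inv_nhdsGT_zero.comp hden)
    have hlog : Tendsto (fun Y : ℝ => Real.log ((1 + α*Y) / (1 - α*Y)))
        (nhdsWithin (1/α) (Iio (1/α))) atTop := by
      have := Real.tendsto_log_atTop.comp hu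
      refine this.congr fun Y => ?_
      rw [div_eq_mul_inv]; rfl
    have := (hlog.atTop_div_const (by norm_num : (0:ℝ) < 2)).atTop_div_const
      (by positivity : (0:ℝ) < 2*α)
    exact this
  have := Filter.Tendsto.atBot_add_atBot hA (tendsto_neg_atTop_atBot.comp hB)
  refine this.congr fun Y => ?_
  rw [hh Y]
  simp only [Function.comp_apply]
  ring

/-- For `α > 0`, `h(Y) = Y/(2α²Y² − 2) − arctanh(αY)/(2α)` is well defined
(the denominator does not vanish) and strictly monotone (decreasing) on `(−1/α, 1/α)`,
with `h(Y) → −∞` as `Y → (1/α)⁻` and `h(Y) → +∞` as `Y → (−1/α)⁺`. -/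
theorem stmt9 (α : ℝ) (hα : 0 < α)
    (h : ℝ → ℝ)
    (hh : ∀ Y, h Y = Y / (2*α^2*Y^2 - 2) - arctanh (α*Y) / (2*α)) :
    (∀ Y ∈ Ioo (-(1/α)) (1/α), 2*α^2*Y^2 - 2 ≠ 0) ∧
    StrictAntiOn h (Ioo (-(1/α)) (1/α)) ∧
    Tendsto h (nhdsWithin (1/α) (Iio (1/α))) atBot ∧
    Tendsto h (nhdsWithin (-(1/α)) (Ioi (-(1/α)))) atTop := by
  have hfun : h = fun Y => Y / (2*α^2*Y^2 - 2) - arctanh (α*Y) / (2*α) := funext hh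
  -- basic facts on the interval
  have key : ∀ Y ∈ Ioo (-(1/α)) (1/α), 2*α^2*Y^2 - 2 < 0 := by
    intro Y hY
    have h1 : α * Y < 1 := by
      have := hY.2
      calc α * Y < α * (1/α) := by exact mul_lt_mul_of_pos_left hY.2 hα
        _ = 1 := by field_simp
    have h2 : -1 < α * Y := by
      have : α * (-(1/α)) < α * Y := mul_lt_mul_of_pos_left hY.1 hα
      calc (-1:ℝ) = α * (-(1/α)) := by field_simp
        _ < α * Y := this
    nlinarith
  have hne : ∀ Y ∈ Ioo (-(1/α)) (1/α), 2*α^2*Y^2 - 2 ≠ 0 :=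
    fun Y hY => ne_of_lt (key Y hY)
  -- bounds on αY
  have hb : ∀ Y ∈ Ioo (-(1/α)) (1/α), -1 < α*Y ∧ α*Y < 1 := by
    intro Y hY
    constructor
    · have : α * (-(1/α)) < α * Y := mul_lt_mul_of_pos_left hY.1 hα
      calc (-1:ℝ) = α * (-(1/α)) := by field_simp
        _ < α * Y := this
    · calc α * Y < α * (1/α) := mul_lt_mul_of_pos_left hY.2 hα
        _ = 1 := by field_simp
  -- derivative of h on the interval
  have hderiv : ∀ Y ∈ Ioo (-(1/α)) (1/α),
      HasDerivAt h (-4 / (2*α^2*Y^2 - 2)^2) Y := by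
    intro Y hY
    obtain ⟨hl, hr⟩ := hb Y hY
    have hp1 : (0:ℝ) < 1 + α*Y := by linarith
    have hp2 : (0:ℝ) < 1 - α*Y := by linarith
    have hD := hne Y hY
    -- first term
    have t1 : HasDerivAt (fun Y => Y / (2*α^2*Y^2 - 2))
        ((1 * (2*α^2*Y^2 - 2) - Y * (2*α^2*(2*Y))) / (2*α^2*Y^2 - 2)^2) Y := by
      have hnum : HasDerivAt (fun Y : ℝ => Y) 1 Y := hasDerivAt_id Y
      have hden : HasDerivAt (fun Y : ℝ => 2*α^2*Y^2 - 2) (2*α^2*(2*Y)) Y := by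
        have : HasDerivAt (fun Y : ℝ => Y^2) (2*Y) Y := by
          simpa using hasDerivAt_pow 2 Y
        simpa using ((this.const_mul (2*α^2)).sub_const 2)
      exact hnum.div hden hD
    -- u = (1+αY)/(1−αY)
    have hu : HasDerivAt (fun Y => (1 + α*Y) / (1 - α*Y))
        ((α * (1 - α*Y) - (1 + α*Y) * (-α)) / (1 - α*Y)^2) Y := by
      have h1 : HasDerivAt (fun Y : ℝ => 1 + α*Y) α Y := by
        simpa using ((hasDerivAt_id Y).const_mul α).const_add 1
      have h2 : HasDerivAt (fun Y : ℝ => 1 - α*Y) (-α) Y := by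
        simpa using ((hasDerivAt_id Y).const_mul α).const_sub 1
      exact h1.div h2 (by positivity)
    have hupos : (0:ℝ) < (1 + α*Y) / (1 - α*Y) := by positivity
    have t2 : HasDerivAt (fun Y => arctanh (α*Y))
        ((α * (1 - α*Y) - (1 + α*Y) * (-α)) / (1 - α*Y)^2 / ((1 + α*Y) / (1 - α*Y)) / 2) Y := by
      unfold arctanh
      exact (hu.log (ne_of_gt hupos)).div_const 2
    have := t1.sub (t2.div_const (2*α))
    rw [hfun]
    refine this.congr_deriv ?_
    have h2a : (2*α : ℝ) ≠ 0 := by positivity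
    have hq : 1 - α^2*Y^2 ≠ 0 := by nlinarith
    have hq2 : α^2*Y^2 - 1 ≠ 0 := by nlinarith
    field_simp
    ring
  refine ⟨hne, ?_, ?_, ?_⟩
  · -- strict anti
    apply strictAntiOn_of_deriv_neg (convex_Ioo _ _)
    · intro Y hY
      exact ((hderiv Y hY).differentiableAt).continuousAt.continuousWithinAt
    · intro Y hY
      rw [interior_Ioo] at hY
      rw [(hderiv Y hY).deriv]
      exact div_neg_of_neg_of_pos (by norm_num) (sq_pos_of_ne_zero (hne Y hY))
  · exact tendsto_atBot (α:=α) hα h hh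
  · -- use oddness: h Y = -(h (-Y))
    have hodd : ∀ Y, h Y = -(h (-Y)) := by
      intro Y
      rw [hh, hh, show α * -Y = -(α*Y) by ring, arctanh_odd]
      have : 2*α^2*(-Y)^2 - 2 = 2*α^2*Y^2 - 2 := by ring
      rw [this, neg_div]
      ring
    have hneg : Tendsto (fun Y : ℝ => -Y) (nhdsWithin (-(1/α)) (Ioi (-(1/α))))
        (nhdsWithin (1/α) (Iio (1/α))) := by
      rw [tendsto_nhdsWithin_iff]
      constructor
      · have : Tendsto (fun Y : ℝ => -Y) (nhds (-(1/α))) (nhds (1/α)) := by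
          simpa using (continuous_neg.tendsto (-(1/α))).mono_left le_rfl
        exact this.mono_left nhdsWithin_le_nhds
      · filter_upwards [self_mem_nhdsWithin] with Y hY
        simp only [mem_Iio]
        simpa using neg_lt_neg (mem_Ioi.mp hY)
    have := (tendsto_atBot hα h hh).comp hneg
    have h2 : Tendsto (fun Y => -(h (-Y))) (nhdsWithin (-(1/α)) (Ioi (-(1/α)))) atTop :=
      tendsto_neg_atBot_atTop.comp this
    exact h2.congr fun Y => (hodd Y).symm
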